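/- Let p be a prime and F a field of characteristic p. For Q(x) = x^p + x^{p-1} + ... + x - 1 in F[x], the identity x(1-x)·Q'(x) = 1 + Q(x) holds. In particular, every root α of Q satisfies α(1-α)Q'(α) = 1. -/

import Mathlib

open Polynomial

theorem stmt_10 (p : ℕ) (hp : p.Prime) (F : Type) [Field F] [CharP F p] :
    (X * (1 - X) * ((∑ i ∈ Finset.Icc 1 p, (X : F[X]) ^ i) - 1).derivative =
        1 + ((∑ i ∈ Finset.Icc 1 p, (X : F[X]) ^ i) - 1)) ∧
    ∀ α : F, ((∑ i ∈ Finset.Icc 1 p, (X : F[X]) ^ i) - 1).eval α = 0 →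
      α * (1 - α) *
        (((∑ i ∈ Finset.Icc 1 p, (X : F[X]) ^ i) - 1).derivative.eval α) = 1 := by
  set S : F[X] := ∑ i ∈ Finset.Icc 1 p, (X : F[X]) ^ i with hSdef
  have h1 : S = X * ∑ i ∈ Finset.range p, (X : F[X]) ^ i := by
    rw [hSdef, Finset.mul_sum, show Finset.Icc 1 p = Finset.Ico 1 (p+1) by
      rw [Finset.Ico_add_one_right_eq_Icc], Finset.sum_Ico_eq_sum_range]
    simp [pow_add, pow_succ, mul_comm]
  have hgeom : (1 - X) * S = X - X ^ (p + 1) := by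
    have hg := geom_sum_mul (X : F[X]) p
    rw [h1]
    linear_combination (-(X : F[X])) * hg
  have hd := congrArg derivative hgeom
  have hcast : ((p : F[X]) + 1) = 1 := by
    have : (p : F[X]) = 0 := by
      rw [← map_natCast (C : F →+* F[X]) p, CharP.cast_eq_zero F p, map_zero]
    rw [this, zero_add]
  rw [derivative_mul, derivative_sub, derivative_sub, derivative_one, derivative_X,
    derivative_X_pow] at hd
  -- hd : (0 - 1) * S + (1 - X) * derivative S = 1 - C (↑(p+1)) * X ^ (p+1-1)
  have hd2 : (1 - X) * derivative S = 1 - X ^ p + S := by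
    have hc : (C ((p : F) + 1)) = 1 := by
      rw [CharP.cast_eq_zero F p, zero_add, map_one]
    push_cast at hd
    rw [hc] at hd
    linear_combination hd
  have key : X * (1 - X) * derivative S = S := by
    calc X * (1 - X) * derivative S = X * ((1 - X) * derivative S) := by ring
    _ = X * (1 - X ^ p + S) := by rw [hd2]
    _ = (X - X ^ (p + 1)) + X * S := by ring
    _ = (1 - X) * S + X * S := by rw [hgeom]
    _ = S := by ring
  have keyQ : X * (1 - X) * derivative (S - 1) = 1 + (S - 1) := by
    rw [derivative_sub, derivative_one, sub_zero, key]; ring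
  refine ⟨keyQ, fun α hα => ?_⟩
  have := congrArg (eval α) keyQ
  simp only [eval_mul, eval_add, eval_sub, eval_one, eval_X] at this
  have hα' : eval α S = 1 := by
    have := hα
    simp only [eval_sub, eval_one, sub_eq_zero] at this
    exact this
  rw [this, hα']
  ring
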